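/- Let A : ℝ^n → ℝ^m be a continuous linear map, b ∈ ℝ^m, and let G(y) = g(A y + b). Then u ∈ ℝ^n is a subgradient of G at y₀ if and only if there exists a subgradient v of g at A y₀ + b such that u = A* v, where A* is the adjoint of A. -/

import Mathlib

open scoped RealInnerProductSpace Pointwise

set_option maxHeartbeats 1000000

/-- `u` is a subgradient of `G : y ↦ g (A y + b)` at `y₀` iff `u = A* v` for some
subgradient `v` of `g` at `A y₀ + b`. -/
theorem stmt_1 {n m : ℕ}
    (g : EuclideanSpace ℝ (Fin m) → ℝ)
    (hg : ConvexOn ℝ Set.univ g) (hgc : Continuous g)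
    (A : EuclideanSpace ℝ (Fin n) →L[ℝ] EuclideanSpace ℝ (Fin m))
    (b : EuclideanSpace ℝ (Fin m))
    (y₀ u : EuclideanSpace ℝ (Fin n)) :
    (∀ w, g (A w + b) ≥ g (A y₀ + b) + ⟪u, w - y₀⟫) ↔
      ∃ v : EuclideanSpace ℝ (Fin m),
        (∀ w, g w ≥ g (A y₀ + b) + ⟪v, w - (A y₀ + b)⟫) ∧
        u = ContinuousLinearMap.adjoint A v := by
  constructor
  · intro h
    set z₀ : EuclideanSpace ℝ (Fin m) := A y₀ + b with hz₀
    -- difference quotient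
    set q : EuclideanSpace ℝ (Fin m) → ℝ → ℝ :=
      fun z t => (g (z₀ + t • z) - g z₀) / t with hq
    -- convexity inequality helper
    have hcvx : ∀ (x y : EuclideanSpace ℝ (Fin m)) (a c : ℝ), 0 ≤ a → 0 ≤ c → a + c = 1 →
        g (a • x + c • y) ≤ a * g x + c * g y := fun x y a c ha hc hac => by
      simpa using hg.2 (Set.mem_univ x) (Set.mem_univ y) ha hc hac
    -- monotonicity of the difference quotient
    have hq_mono : ∀ z : EuclideanSpace ℝ (Fin m), ∀ s t : ℝ, 0 < s → s ≤ t →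
        q z s ≤ q z t := by
      intro z s t hs hst
      have ht : 0 < t := lt_of_lt_of_le hs hst
      have key : g (z₀ + s • z) ≤ (1 - s / t) * g z₀ + (s / t) * g (z₀ + t • z) := by
        have heq : (1 - s / t) • z₀ + (s / t) • (z₀ + t • z) = z₀ + s • z := by
          match_scalars <;> field_simp <;> ring
        rw [← heq]
        exact hcvx z₀ (z₀ + t • z) (1 - s / t) (s / t)
          (by rw [sub_nonneg]; exact div_le_one_of_le₀ hst ht.le)
          (by positivity) (by ring)
      have h2 : g (z₀ + s • z) - g z₀ ≤ (s / t) * (g (z₀ + t • z) - g z₀) := by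
        nlinarith
      rw [hq]
      rw [div_le_div_iff₀ hs ht]
      have := mul_le_mul_of_nonneg_right h2 ht.le
      calc (g (z₀ + s • z) - g z₀) * t ≤ (s / t) * (g (z₀ + t • z) - g z₀) * t := this
        _ = (g (z₀ + t • z) - g z₀) * s := by field_simp
    -- lower bound for the difference quotient
    have hlow : ∀ z : EuclideanSpace ℝ (Fin m), ∀ t : ℝ, 0 < t →
        g z₀ - g (z₀ - z) ≤ q z t := by
      intro z t ht
      have h1t : (0:ℝ) < 1 + t := by positivity
      have heq : (t / (1 + t)) • (z₀ - z) + (1 / (1 + t)) • (z₀ + t • z) = z₀ := by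
        match_scalars <;> field_simp <;> ring
      have key : g z₀ ≤ (t / (1 + t)) * g (z₀ - z) + (1 / (1 + t)) * g (z₀ + t • z) := by
        have key0 := hcvx (z₀ - z) (z₀ + t • z) (t / (1 + t)) (1 / (1 + t))
          (by positivity) (by positivity) (by field_simp; ring)
        rwa [heq] at key0
      have key2 : (1 + t) * g z₀ ≤ t * g (z₀ - z) + g (z₀ + t • z) := by
        have h' := mul_le_mul_of_nonneg_right key h1t.le
        calc (1 + t) * g z₀ = g z₀ * (1 + t) := by ring
          _ ≤ ((t / (1 + t)) * g (z₀ - z) + (1 / (1 + t)) * g (z₀ + t • z)) * (1 + t) := h'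
          _ = t * g (z₀ - z) + g (z₀ + t • z) := by field_simp
      rw [hq, le_div_iff₀ ht]
      nlinarith
    -- the set of difference quotients
    set S : EuclideanSpace ℝ (Fin m) → Set ℝ :=
      fun z => {r | ∃ t : ℝ, 0 < t ∧ r = q z t} with hS
    have hSne : ∀ z, (S z).Nonempty := fun z => ⟨q z 1, 1, one_pos, rfl⟩
    have hSbdd : ∀ z, BddBelow (S z) := by
      intro z
      refine ⟨g z₀ - g (z₀ - z), ?_⟩
      rintro r ⟨t, ht, rfl⟩
      exact hlow z t ht
    set p : EuclideanSpace ℝ (Fin m) → ℝ := fun z => sInf (S z) with hp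
    have hp_le : ∀ z t, 0 < t → p z ≤ q z t := fun z t ht =>
      csInf_le (hSbdd z) ⟨t, ht, rfl⟩
    have hle_p : ∀ (z : EuclideanSpace ℝ (Fin m)) (c : ℝ),
        (∀ t, 0 < t → c ≤ q z t) → c ≤ p z := by
      intro z c hc
      apply le_csInf (hSne z)
      rintro r ⟨t, ht, rfl⟩
      exact hc t ht
    -- positive homogeneity
    have hp_hom : ∀ c : ℝ, 0 < c → ∀ z, p (c • z) = c * p z := by
      intro c hc z
      have hSeq : S (c • z) = c • S z := by
        ext r
        simp only [hS, Set.mem_setOf_eq, Set.mem_smul_set]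
        constructor
        · rintro ⟨t, ht, rfl⟩
          refine ⟨q z (t * c), ⟨t * c, by positivity, rfl⟩, ?_⟩
          show c • ((g (z₀ + (t * c) • z) - g z₀) / (t * c)) = (g (z₀ + t • (c • z)) - g z₀) / t
          rw [smul_smul, smul_eq_mul]
          field_simp
        · rintro ⟨r, ⟨t, ht, rfl⟩, rfl⟩
          refine ⟨t / c, by positivity, ?_⟩
          show c • ((g (z₀ + t • z) - g z₀) / t) = (g (z₀ + (t / c) • (c • z)) - g z₀) / (t / c)
          rw [smul_smul, div_mul_cancel₀ _ hc.ne', smul_eq_mul]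
          field_simp
      show sInf (S (c • z)) = c * sInf (S z)
      rw [hSeq, Real.sInf_smul_of_nonneg hc.le, smul_eq_mul]
    -- subadditivity
    have hp_add : ∀ x y : EuclideanSpace ℝ (Fin m), p (x + y) ≤ p x + p y := by
      intro x y
      refine le_of_forall_pos_le_add ?_
      intro ε hε
      obtain ⟨rx, ⟨tx, htx, rfl⟩, hrx⟩ := exists_lt_of_csInf_lt (hSne x)
        (show p x < p x + ε / 2 by linarith)
      obtain ⟨ry, ⟨ty, hty, rfl⟩, hry⟩ := exists_lt_of_csInf_lt (hSne y)
        (show p y < p y + ε / 2 by linarith)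
      set t := min tx ty / 2 with htdef
      have ht : 0 < t := by positivity
      have h2t : 0 < 2 * t := by positivity
      have key : q (x + y) t ≤ q x (2 * t) + q y (2 * t) := by
        have heq : z₀ + t • (x + y) =
            (1/2 : ℝ) • (z₀ + (2*t) • x) + (1/2 : ℝ) • (z₀ + (2*t) • y) := by
          module
        have := hcvx (z₀ + (2*t) • x) (z₀ + (2*t) • y) (1/2) (1/2)
          (by norm_num) (by norm_num) (by norm_num)
        rw [← heq] at this
        rw [hq]
        simp only
        rw [div_add_div _ _ h2t.ne' h2t.ne', div_le_div_iff₀ ht (by positivity)]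
        nlinarith
      have h2tx : 2 * t ≤ tx := by
        rw [htdef]; have := min_le_left tx ty; linarith
      have h2ty : 2 * t ≤ ty := by
        rw [htdef]; have := min_le_right tx ty; linarith
      calc p (x + y) ≤ q (x + y) t := hp_le _ t ht
        _ ≤ q x (2 * t) + q y (2 * t) := key
        _ ≤ q x tx + q y ty := add_le_add (hq_mono x _ _ h2t h2tx) (hq_mono y _ _ h2t h2ty)
        _ ≤ (p x + ε / 2) + (p y + ε / 2) := add_le_add hrx.le hry.le
        _ = p x + p y + ε := by ring
    -- the hypothesis gives ⟪u, d⟫ ≤ q (A d) t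
    have huq : ∀ (d : EuclideanSpace ℝ (Fin n)) (t : ℝ), 0 < t → ⟪u, d⟫ ≤ q (A d) t := by
      intro d t ht
      have hxy := h (y₀ + t • d)
      have hAd : A (y₀ + t • d) + b = z₀ + t • (A d) := by
        rw [map_add, map_smul, hz₀]; module
      rw [hAd] at hxy
      have hinner : ⟪u, (y₀ + t • d) - y₀⟫ = t * ⟪u, d⟫ := by
        rw [add_sub_cancel_left, real_inner_smul_right]
      rw [hinner] at hxy
      rw [hq, le_div_iff₀ ht]
      nlinarith
    have hup : ∀ d : EuclideanSpace ℝ (Fin n), ⟪u, d⟫ ≤ p (A d) := fun d =>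
      hle_p _ _ (huq d)
    -- u vanishes on ker A
    set A' := A.toLinearMap with hA'
    set u' : EuclideanSpace ℝ (Fin n) →ₗ[ℝ] ℝ := ((innerSL ℝ) u).toLinearMap with hu'
    have hker : LinearMap.ker A' ≤ LinearMap.ker u' := by
      intro d hd
      rw [LinearMap.mem_ker] at hd ⊢
      have h1 : ⟪u, d⟫ ≤ p (A d) := hup d
      have h2 : ⟪u, -d⟫ ≤ p (A (-d)) := hup (-d)
      have hAd : (A d : EuclideanSpace ℝ (Fin m)) = 0 := hd
      have hp0 : p (0 : EuclideanSpace ℝ (Fin m)) ≤ 0 := by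
        have := hp_le (0 : EuclideanSpace ℝ (Fin m)) 1 one_pos
        simpa [hq] using this
      rw [hAd] at h1
      rw [map_neg, hAd, neg_zero] at h2
      rw [inner_neg_right] at h2
      have : ⟪u, d⟫ = 0 := le_antisymm (h1.trans hp0) (by linarith)
      simpa [hu'] using this
    -- the partial linear functional on range A
    set fmap : LinearMap.range A' →ₗ[ℝ] ℝ :=
      ((LinearMap.ker A').liftQ u' hker).comp A'.quotKerEquivRange.symm.toLinearMap with hfmap
    set f : EuclideanSpace ℝ (Fin m) →ₗ.[ℝ] ℝ := ⟨LinearMap.range A', fmap⟩ with hf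
    have hfval : ∀ d : EuclideanSpace ℝ (Fin n),
        f ⟨A' d, LinearMap.mem_range_self A' d⟩ = ⟪u, d⟫ := by
      intro d
      show fmap ⟨A' d, _⟩ = ⟪u, d⟫
      rw [hfmap]
      simp only [LinearMap.comp_apply, LinearEquiv.coe_toLinearMap]
      rw [LinearMap.quotKerEquivRange_symm_apply_image A' d]
      rfl
    have hfle : ∀ x : f.domain, f x ≤ p x := by
      rintro ⟨x, hx⟩
      obtain ⟨d, rfl⟩ := hx
      rw [hfval d]
      exact hup d
    obtain ⟨ψ, hψext, hψle⟩ := exists_extension_of_le_sublinear f p hp_hom hp_add hfle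
    -- Riesz representation of ψ
    set ψ' : EuclideanSpace ℝ (Fin m) →L[ℝ] ℝ := LinearMap.toContinuousLinearMap ψ with hψ'
    set v : EuclideanSpace ℝ (Fin m) :=
      (InnerProductSpace.toDual ℝ (EuclideanSpace ℝ (Fin m))).symm ψ' with hv
    have hvz : ∀ z : EuclideanSpace ℝ (Fin m), ⟪v, z⟫ = ψ z := by
      intro z
      rw [hv, InnerProductSpace.toDual_symm_apply]
      rfl
    refine ⟨v, ?_, ?_⟩
    · intro w
      have h1 : ⟪v, w - z₀⟫ = ψ (w - z₀) := hvz _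
      have h2 : ψ (w - z₀) ≤ p (w - z₀) := hψle _
      have h3 : p (w - z₀) ≤ q (w - z₀) 1 := hp_le _ 1 one_pos
      have h4 : q (w - z₀) 1 = g w - g z₀ := by
        rw [hq]; simp
      have : ⟪v, w - z₀⟫ ≤ g w - g z₀ := by
        rw [h1]; linarith [h2, h3.trans_eq h4]
      rw [hz₀] at this
      linarith
    · apply ext_inner_right ℝ
      intro d
      rw [ContinuousLinearMap.adjoint_inner_left]
      have h1 : ⟪v, A d⟫ = ψ (A d) := hvz _
      have h2 : ψ (A d) = f ⟨A' d, LinearMap.mem_range_self A' d⟩ :=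
        hψext ⟨A' d, LinearMap.mem_range_self A' d⟩
      rw [h1, h2, hfval d]
  · rintro ⟨v, hv, rfl⟩
    intro w
    have hw := hv (A w + b)
    have heq : ⟪ContinuousLinearMap.adjoint A v, w - y₀⟫ = ⟪v, (A w + b) - (A y₀ + b)⟫ := by
      rw [ContinuousLinearMap.adjoint_inner_left, map_sub]
      congr 1
      abel
    rw [heq]
    exact hw
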